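/- Assume (A1), (A2) and (A3). Then for every n ≥ 1 and every σ ∈ 𝒮_n one has Γ(σ) = ℒ(σ), where σ⁺ = (σ₁⁺,…,σ_n⁺) and ℒ(σ) = {σ, σ⁺} ∪ {σ|_h ∗ (σ_{h+1}⁺,…,σ_n⁺) : 1 ≤ h ≤ n−1} (σ|_h being the prefix of σ of length h and ∗ denoting concatenation); moreover 𝒮_n = G_n ∩ Ψ^n for every n ≥ 1, and hence 𝒮* = G* ∩ (∪_{n≥1} Ψ^n). -/

import Mathlib

open scoped Classical ENNReal
open Filter MeasureTheory

noncomputable section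

namespace MTM

/-- the edge relation of the directed graph `𝒢`: `(i,j) ∈ G₂ ↔ p i j > 0`. -/
def edge (p : ℕ → ℕ → ℝ) (i j : ℕ) : Prop := 0 < p i j

/-- product of transition weights along a word. -/
def pword (p : ℕ → ℕ → ℝ) : List ℕ → ℝ
  | [] => 1
  | [_] => 1
  | a :: b :: t => p a b * pword p (b :: t)

/-- product of contraction ratios along a word. -/
def sword (sr : ℕ → ℕ → ℝ) : List ℕ → ℝ
  | [] => 1
  | [_] => 1
  | a :: b :: t => sr a b * sword sr (b :: t)

/-- `𝒯(σ)`: all lifts of a word, each letter `i` may be replaced by `i + N`. -/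
def lifts (N : ℕ) : List ℕ → Finset (List ℕ)
  | [] => {[]}
  | i :: t => (lifts N t).biUnion fun l => {i :: l, (i + N) :: l}

/-- `Γ(σ) = G_n ∩ 𝒯(σ)`. -/
def Gam (p : ℕ → ℕ → ℝ) (N : ℕ) (σ : List ℕ) : Finset (List ℕ) :=
  (lifts N σ).filter fun τ => τ.Chain' (edge p)

/-- words over the alphabet `Ψ = {1,…,N}`. -/
def isPsiWord (N : ℕ) (σ : List ℕ) : Prop :=
  σ ≠ [] ∧ ∀ x ∈ σ, x ∈ Finset.Icc 1 N

/-- `σ ∈ 𝒮_*`: a `Ψ`-word having at least one admissible lift. -/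
def isSword (p : ℕ → ℕ → ℝ) (N : ℕ) (σ : List ℕ) : Prop :=
  isPsiWord N σ ∧ (Gam p N σ).Nonempty

/-- `σ ∈ G_*`: admissible words over `Ω = {1,…,2N}`. -/
def isGword (p : ℕ → ℕ → ℝ) (N : ℕ) (σ : List ℕ) : Prop :=
  σ ≠ [] ∧ (∀ x ∈ σ, x ∈ Finset.Icc 1 (2 * N)) ∧ σ.Chain' (edge p)

/-- `σ ∈ H₁^*`: admissible words with all letters in `Ψ`. -/
def isH1word (p : ℕ → ℕ → ℝ) (N : ℕ) (σ : List ℕ) : Prop :=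
  σ ≠ [] ∧ (∀ x ∈ σ, x ∈ Finset.Icc 1 N) ∧ σ.Chain' (edge p)

/-- `σ ∈ H₂^*`: admissible words with all letters in `Υ = {N+1,…,2N}`. -/
def isH2word (p : ℕ → ℕ → ℝ) (N : ℕ) (σ : List ℕ) : Prop :=
  σ ≠ [] ∧ (∀ x ∈ σ, x ∈ Finset.Icc (N + 1) (2 * N)) ∧ σ.Chain' (edge p)

/-- `μ(J_σ) = Σ_{σ̃ ∈ Γ(σ)} χ_{σ̃₁} p_{σ̃}`. -/
def muJ (p : ℕ → ℕ → ℝ) (χ : ℕ → ℝ) (N : ℕ) (σ : List ℕ) : ℝ :=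
  ∑ τ ∈ Gam p N σ, χ (τ.headD 0) * pword p τ

/-- `ℰ_r(σ) = μ(J_σ) s_σ^r`, with `ℰ_r(θ) = 1` for the empty word. -/
def Er (p : ℕ → ℕ → ℝ) (χ : ℕ → ℝ) (sr : ℕ → ℕ → ℝ) (N : ℕ) (r : ℝ) (σ : List ℕ) : ℝ :=
  if σ = [] then 1 else muJ p χ N σ * sword sr σ ^ r

/-- `I_{1,σ}` resp. `I_{2,σ}`: the part of `μ(J_σ)` coming from lifts ending with `i`
(resp. with `i⁺`, when applied with `i + N`). -/
def Ipart (p : ℕ → ℕ → ℝ) (χ : ℕ → ℝ) (N : ℕ) (i : ℕ) (σ : List ℕ) : ℝ :=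
  ∑ τ ∈ (Gam p N σ).filter (fun τ => τ.getLastD 0 = i), χ (τ.headD 0) * pword p τ

/-- all words of a given length over a finite alphabet. -/
def wordsOfLen (S : Finset ℕ) : ℕ → Finset (List ℕ)
  | 0 => {[]}
  | n + 1 => (wordsOfLen S n).biUnion fun l => S.image fun a => a :: l

/-- `𝒮_n` as a finite set of words. -/
def Sn (p : ℕ → ℕ → ℝ) (N n : ℕ) : Finset (List ℕ) :=
  (wordsOfLen (Finset.Icc 1 N) n).filter (isSword p N)

/-- irreducibility of the sub-matrix of `p` indexed by `S`: the corresponding directed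
graph is strongly connected. -/
def irreducibleOn (p : ℕ → ℕ → ℝ) (S : Finset ℕ) : Prop :=
  ∀ i ∈ S, ∀ j ∈ S, ∃ c : List ℕ, (∀ x ∈ c, x ∈ S) ∧ List.Chain (edge p) i (c ++ [j])

/-- Assumption (A1): `P₁, P₂` irreducible and `P₄ = 0`. -/
def A1 (p : ℕ → ℕ → ℝ) (N : ℕ) : Prop :=
  irreducibleOn p (Finset.Icc 1 N) ∧
    irreducibleOn (fun a b => p (a + N) (b + N)) (Finset.Icc 1 N) ∧
    ∀ i ∈ Finset.Icc 1 N, ∀ j ∈ Finset.Icc 1 N, p (i + N) j = 0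

/-- Assumption (A2). -/
def A2 (p : ℕ → ℕ → ℝ) (N : ℕ) : Prop :=
  ∀ i ∈ Finset.Icc 1 N,
    2 ≤ ((Finset.Icc 1 N).filter fun j => 0 < p i j).card ∧
      2 ≤ ((Finset.Icc 1 N).filter fun j => 0 < p (i + N) (j + N)).card

/-- Assumption (A3): `ℳ_{i,j} = ∅` or `ℳ_{i,j} = {(i,j),(i,j⁺),(i⁺,j⁺)}`. -/
def A3 (p : ℕ → ℕ → ℝ) (N : ℕ) : Prop :=
  ∀ i ∈ Finset.Icc 1 N, ∀ j ∈ Finset.Icc 1 N,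
    (p i j = 0 ∧ p i (j + N) = 0 ∧ p (i + N) j = 0 ∧ p (i + N) (j + N) = 0) ∨
      (0 < p i j ∧ 0 < p i (j + N) ∧ p (i + N) j = 0 ∧ 0 < p (i + N) (j + N))

/-- Assumption (A4): `ℳ_{i,j} = ∅` or `ℳ_{i,j} = 𝒩_{i,j}`. -/
def A4 (p : ℕ → ℕ → ℝ) (N : ℕ) : Prop :=
  ∀ i ∈ Finset.Icc 1 N, ∀ j ∈ Finset.Icc 1 N,
    (p i j = 0 ∧ p i (j + N) = 0 ∧ p (i + N) j = 0 ∧ p (i + N) (j + N) = 0) ∨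
      (0 < p i j ∧ 0 < p i (j + N) ∧ 0 < p (i + N) j ∧ 0 < p (i + N) (j + N))

/-- Assumption (A5): `P₁` is irreducible. -/
def A5 (p : ℕ → ℕ → ℝ) (N : ℕ) : Prop := irreducibleOn p (Finset.Icc 1 N)

/-- `T_σ = T_{σ₁σ₂} ∘ ⋯ ∘ T_{σ_{n-1}σ_n}` (identity for words of length `≤ 1`). -/
def Tword {E : Type*} (T : ℕ → ℕ → E → E) : List ℕ → E → E
  | [], x => x
  | [_], x => x
  | a :: b :: t, x => T a b (Tword T (b :: t) x)

/-- the cylinder set `J_σ = T_σ (J_{σ_n})`. -/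
def Jword {E : Type*} (T : ℕ → ℕ → E → E) (J : ℕ → Set E) (σ : List ℕ) : Set E :=
  Tword T σ '' J (σ.getLastD 0)

/-- the Mauldin–Williams fractal `K = ⋂_k ⋃_{σ ∈ G_k} J_σ`. -/
def attractor {E : Type*} (p : ℕ → ℕ → ℝ) (N : ℕ) (T : ℕ → ℕ → E → E) (J : ℕ → Set E) :
    Set E :=
  ⋂ n : ℕ, ⋃ σ ∈ {σ : List ℕ | isGword p N σ ∧ σ.length = n + 1}, Jword T J σ

/-- `μ` is reducible: `μ = ν₁ ∘ π₁⁻¹` for the Markov-type measure `ν₁` associated with some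
`N × N` row-stochastic matrix and positive probability vector; equivalently, the cylinder
values of `μ` are of Markov type. -/
def reducible {E : Type*} [MeasurableSpace E] (p : ℕ → ℕ → ℝ) (N : ℕ)
    (T : ℕ → ℕ → E → E) (J : ℕ → Set E) (μ : Measure E) : Prop :=
  ∃ (pt : ℕ → ℕ → ℝ) (χt : ℕ → ℝ),
    (∀ i ∈ Finset.Icc 1 N, ∀ j ∈ Finset.Icc 1 N, 0 ≤ pt i j) ∧
      (∀ i ∈ Finset.Icc 1 N, ∑ j ∈ Finset.Icc 1 N, pt i j = 1) ∧
      (∀ i ∈ Finset.Icc 1 N, 0 < χt i) ∧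
      (∑ i ∈ Finset.Icc 1 N, χt i = 1) ∧
      ∀ σ : List ℕ, isSword p N σ →
        μ (Jword T J σ) = ENNReal.ofReal (χt (σ.headD 0) * pword pt σ)

/-- `e^r_{k,r}(μ)`: the `k`-th quantization error of order `r`, to the `r`-th power. -/
def quantErr {E : Type*} [PseudoMetricSpace E] [MeasurableSpace E] (r : ℝ) (μ : Measure E)
    (k : ℕ) : ℝ :=
  sInf ((fun α : Set E => ∫ x, Metric.infDist x α ^ r ∂μ) ''
    {α : Set E | α.Nonempty ∧ α.Finite ∧ α.ncard ≤ k})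

/-- the upper quantization coefficient `Q̄_r^s(μ) = limsup_k k^{r/s} e^r_{k,r}(μ)`. -/
def upperQC {E : Type*} [PseudoMetricSpace E] [MeasurableSpace E] (r s : ℝ)
    (μ : Measure E) : ℝ≥0∞ :=
  limsup (fun k : ℕ => ENNReal.ofReal ((k : ℝ) ^ (r / s) * quantErr r μ k)) atTop

/-- the lower quantization coefficient `Q̲_r^s(μ)`. -/
def lowerQC {E : Type*} [PseudoMetricSpace E] [MeasurableSpace E] (r s : ℝ)
    (μ : Measure E) : ℝ≥0∞ :=
  liminf (fun k : ℕ => ENNReal.ofReal ((k : ℝ) ^ (r / s) * quantErr r μ k)) atTop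

/-- the upper quantization dimension `D̄_r(μ) = limsup_k log k / (-log e_{k,r}(μ))`. -/
def upperQD {E : Type*} [PseudoMetricSpace E] [MeasurableSpace E] (r : ℝ)
    (μ : Measure E) : ℝ :=
  limsup (fun k : ℕ => Real.log k / (-Real.log (quantErr r μ k ^ (1 / r)))) atTop

/-- the lower quantization dimension `D̲_r(μ)`. -/
def lowerQD {E : Type*} [PseudoMetricSpace E] [MeasurableSpace E] (r : ℝ)
    (μ : Measure E) : ℝ :=
  liminf (fun k : ℕ => Real.log k / (-Real.log (quantErr r μ k ^ (1 / r)))) atTop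

/-- spectral radius of a real matrix: the largest modulus of a complex eigenvalue. -/
def specRad {n : Type*} [Fintype n] [DecidableEq n] (M : Matrix n n ℝ) : ℝ :=
  sSup (norm '' spectrum ℂ (M.map (algebraMap ℝ ℂ)))

/-- `A₁(s) = ((p_{i,j} s_{i,j}^r)^s)_{i,j=1}^N`. -/
def matA1 (p sr : ℕ → ℕ → ℝ) (N : ℕ) (r s : ℝ) : Matrix (Fin N) (Fin N) ℝ :=
  Matrix.of fun i j => (p (i.1 + 1) (j.1 + 1) * sr (i.1 + 1) (j.1 + 1) ^ r) ^ s

/-- `A₂(s) = ((p_{i⁺,j⁺} s_{i⁺,j⁺}^r)^s)_{i,j=1}^N`. -/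
def matA2 (p sr : ℕ → ℕ → ℝ) (N : ℕ) (r s : ℝ) : Matrix (Fin N) (Fin N) ℝ :=
  Matrix.of fun i j => (p (i.1 + 1 + N) (j.1 + 1 + N) * sr (i.1 + 1 + N) (j.1 + 1 + N) ^ r) ^ s

/-- `A₃(s) = ((p_{i,j⁺} s_{i,j⁺}^r)^s)_{i,j=1}^N`. -/
def matA3 (p sr : ℕ → ℕ → ℝ) (N : ℕ) (r s : ℝ) : Matrix (Fin N) (Fin N) ℝ :=
  Matrix.of fun i j => (p (i.1 + 1) (j.1 + 1 + N) * sr (i.1 + 1) (j.1 + 1 + N) ^ r) ^ s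

/-- `A₄(s) = ((p_{i⁺,j} s_{i⁺,j}^r)^s)_{i,j=1}^N`. -/
def matA4 (p sr : ℕ → ℕ → ℝ) (N : ℕ) (r s : ℝ) : Matrix (Fin N) (Fin N) ℝ :=
  Matrix.of fun i j => (p (i.1 + 1 + N) (j.1 + 1) * sr (i.1 + 1 + N) (j.1 + 1) ^ r) ^ s

/-- the block matrix `A(s) = [[A₁(s), A₃(s)], [A₄(s), A₂(s)]]`. -/
def matA (p sr : ℕ → ℕ → ℝ) (N : ℕ) (r s : ℝ) :
    Matrix (Fin N ⊕ Fin N) (Fin N ⊕ Fin N) ℝ :=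
  Matrix.fromBlocks (matA1 p sr N r s) (matA3 p sr N r s) (matA4 p sr N r s) (matA2 p sr N r s)

/-- `p̲ = min_{(i,j) ∈ G₂} p_{i,j}`. -/
def pMin (p : ℕ → ℕ → ℝ) (N : ℕ) : ℝ :=
  sInf {x | ∃ i ∈ Finset.Icc 1 (2 * N), ∃ j ∈ Finset.Icc 1 (2 * N), 0 < p i j ∧ x = p i j}

/-- `p̄ = max_{(i,j) ∈ G₂} p_{i,j}`. -/
def pMax (p : ℕ → ℕ → ℝ) (N : ℕ) : ℝ :=
  sSup {x | ∃ i ∈ Finset.Icc 1 (2 * N), ∃ j ∈ Finset.Icc 1 (2 * N), 0 < p i j ∧ x = p i j}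

/-- `s̲ = min_{(i,j) ∈ 𝒮₂} s_{i,j}`. -/
def sMin (p sr : ℕ → ℕ → ℝ) (N : ℕ) : ℝ :=
  sInf {x | ∃ i ∈ Finset.Icc 1 N, ∃ j ∈ Finset.Icc 1 N, isSword p N [i, j] ∧ x = sr i j}

/-- `s̄ = max_{(i,j) ∈ 𝒮₂} s_{i,j}`. -/
def sMax (p sr : ℕ → ℕ → ℝ) (N : ℕ) : ℝ :=
  sSup {x | ∃ i ∈ Finset.Icc 1 N, ∃ j ∈ Finset.Icc 1 N, isSword p N [i, j] ∧ x = sr i j}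

/-- `χ̲ = min_{1 ≤ i ≤ 2N} χ_i`. -/
def chiMin (χ : ℕ → ℝ) (N : ℕ) : ℝ := sInf {x | ∃ i ∈ Finset.Icc 1 (2 * N), x = χ i}

/-- `χ̄ = max_{1 ≤ i ≤ 2N} χ_i`. -/
def chiMax (χ : ℕ → ℝ) (N : ℕ) : ℝ := sSup {x | ∃ i ∈ Finset.Icc 1 (2 * N), x = χ i}

/-- `t` satisfies the defining property of `t_r`:
`(1/n) log Σ_{σ ∈ 𝒮_n} ℰ_r(σ)^{t/(t+r)} → 0`. -/
def trCond (p : ℕ → ℕ → ℝ) (χ : ℕ → ℝ) (sr : ℕ → ℕ → ℝ) (N : ℕ) (r t : ℝ) : Prop :=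
  0 < t ∧
    Tendsto (fun n : ℕ => (n : ℝ)⁻¹ *
      Real.log (∑ σ ∈ Sn p N n, Er p χ sr N r σ ^ (t / (t + r)))) atTop (nhds 0)

/-- the initial word of length `n` of an infinite sequence. -/
def seqTake (x : ℕ → ℕ) (n : ℕ) : List ℕ := (List.range n).map x

/-- `Γ` is a finite maximal antichain among the words satisfying `W`, with respect to the
infinite sequences satisfying `Wseq`. -/
def isMaxAntichain (W : List ℕ → Prop) (Wseq : (ℕ → ℕ) → Prop) (Γ : Finset (List ℕ)) : Prop :=
  (∀ σ ∈ Γ, W σ) ∧ (∀ σ ∈ Γ, ∀ τ ∈ Γ, σ ≠ τ → ¬σ <+: τ) ∧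
    ∀ x : ℕ → ℕ, Wseq x → ∃ n : ℕ, 1 ≤ n ∧ seqTake x n ∈ Γ

/-- infinite admissible sequences with letters in `Ψ`. -/
def isH1seq (p : ℕ → ℕ → ℝ) (N : ℕ) (x : ℕ → ℕ) : Prop :=
  (∀ n, x n ∈ Finset.Icc 1 N) ∧ ∀ n, 0 < p (x n) (x (n + 1))

/-- infinite admissible sequences with letters in `Υ`. -/
def isH2seq (p : ℕ → ℕ → ℝ) (N : ℕ) (x : ℕ → ℕ) : Prop :=
  (∀ n, x n ∈ Finset.Icc (N + 1) (2 * N)) ∧ ∀ n, 0 < p (x n) (x (n + 1))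

/-- minimal length of a word in `Γ`. -/
def minLen (Γ : Finset (List ℕ)) : ℕ := sInf {n | ∃ σ ∈ Γ, σ.length = n}

/-- maximal length of a word in `Γ`. -/
def maxLen (Γ : Finset (List ℕ)) : ℕ := sSup {n | ∃ σ ∈ Γ, σ.length = n}

/-- `Λ_{k,r} = {σ ∈ 𝒮^* : ℰ_r(σ) < c₁^k ≤ ℰ_r(σ^♭)}`. -/
def LamSet (p : ℕ → ℕ → ℝ) (χ : ℕ → ℝ) (sr : ℕ → ℕ → ℝ) (N : ℕ) (r c1 : ℝ) (k : ℕ) :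
    Set (List ℕ) :=
  {σ | isSword p N σ ∧ Er p χ sr N r σ < c1 ^ k ∧ c1 ^ k ≤ Er p χ sr N r σ.dropLast}

/-- `ℒ(σ) = {σ, σ⁺} ∪ {σ|_h ∗ (σ_{h+1}⁺, …, σ_n⁺) : 1 ≤ h ≤ n − 1}`. -/
def Lset (N : ℕ) (σ : List ℕ) : Finset (List ℕ) :=
  (Finset.range (σ.length + 1)).image fun h =>
    σ.take h ++ (σ.drop h).map (fun x => x + N)


section Lemma21

variable {p : ℕ → ℕ → ℝ} {N : ℕ}

lemma eA3 (hA3 : A3 p N) {i j : ℕ} (hi : i ∈ Finset.Icc 1 N) (hj : j ∈ Finset.Icc 1 N) :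
    (edge p i j ↔ edge p i (j + N)) ∧ (edge p i j ↔ edge p (i + N) (j + N)) ∧
      ¬ edge p (i + N) j := by
  rcases hA3 i hi j hj with ⟨h1, h2, h3, h4⟩ | ⟨h1, h2, h3, h4⟩ <;>
    simp [edge, h1, h2, h3, h4]

lemma mem_lifts_cons {τ : List ℕ} {i : ℕ} {t : List ℕ} :
    τ ∈ lifts N (i :: t) ↔ ∃ l ∈ lifts N t, τ = i :: l ∨ τ = (i + N) :: l := by
  simp [lifts, Finset.mem_biUnion]

lemma mem_Lset {τ σ : List ℕ} :
    τ ∈ Lset N σ ↔ ∃ h ≤ σ.length, τ = σ.take h ++ (σ.drop h).map (fun x => x + N) := by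
  simp [Lset, Nat.lt_succ_iff, eq_comm]

lemma prefixLift_mem_lifts : ∀ (σ : List ℕ) (h : ℕ),
    σ.take h ++ (σ.drop h).map (fun x => x + N) ∈ lifts N σ
  | [], h => by simp [lifts]
  | i :: t, 0 => by
      rw [mem_lifts_cons]
      refine ⟨t.take 0 ++ (t.drop 0).map (fun x => x + N), prefixLift_mem_lifts t 0, ?_⟩
      simp
  | i :: t, (h + 1) => by
      rw [mem_lifts_cons]
      exact ⟨_, prefixLift_mem_lifts t h, Or.inl rfl⟩

lemma prefixLift_chain (hA3 : A3 p N) : ∀ (σ : List ℕ),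
    (∀ x ∈ σ, x ∈ Finset.Icc 1 N) → σ.Chain' (edge p) → ∀ h : ℕ,
    (σ.take h ++ (σ.drop h).map (fun x => x + N)).Chain' (edge p)
  | [], _, _, h => by simp [List.Chain']
  | i :: t, hmem, hch, 0 => by
      simp only [List.take_zero, List.drop_zero, List.nil_append, List.map_cons]
      unfold List.Chain'
      rw [List.isChain_cons]
      constructor
      · cases t with
        | nil => simp
        | cons b t' =>
            intro y hy
            simp only [List.map_cons, List.head?_cons, Option.mem_def, Option.some.injEq] at hy
            subst hy
            exact ((eA3 hA3 (hmem i (by simp)) (hmem b (by simp))).2.1).mp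
              (List.isChain_cons_cons.1 hch).1
      · have := prefixLift_chain hA3 t (fun x hx => hmem x (by simp [hx])) hch.tail 0
        simpa [List.Chain'] using this
  | i :: t, hmem, hch, (h + 1) => by
      simp only [List.take_succ_cons, List.drop_succ_cons, List.cons_append]
      unfold List.Chain'
      rw [List.isChain_cons]
      refine ⟨?_, prefixLift_chain hA3 t (fun x hx => hmem x (by simp [hx])) hch.tail h⟩
      cases t with
      | nil => simp
      | cons b t' =>
          have hib : edge p i b := (List.isChain_cons_cons.1 hch).1
          cases h with
          | zero =>
              intro y hy
              simp only [List.take_zero, List.drop_zero, List.nil_append, List.map_cons,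
                List.head?_cons, Option.mem_def, Option.some.injEq] at hy
              subst hy
              exact ((eA3 hA3 (hmem i (by simp)) (hmem b (by simp))).1).mp hib
          | succ h' =>
              intro y hy
              simp only [List.take_succ_cons, List.cons_append, List.head?_cons,
                Option.mem_def, Option.some.injEq] at hy
              subst hy
              exact hib

lemma gam_subset_Lset (hA3 : A3 p N) : ∀ (σ τ : List ℕ),
    (∀ x ∈ σ, x ∈ Finset.Icc 1 N) → τ ∈ Gam p N σ → τ ∈ Lset N σ
  | [], τ, _, hτ => by
      simp only [Gam, lifts, Finset.mem_filter, Finset.mem_singleton] at hτ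
      simp [mem_Lset, hτ.1]
  | i :: t, τ, hmem, hτ => by
      rw [Gam, Finset.mem_filter, mem_lifts_cons] at hτ
      obtain ⟨⟨l, hl, hcase⟩, hch⟩ := hτ
      have hmt : ∀ x ∈ t, x ∈ Finset.Icc 1 N := fun x hx => hmem x (by simp [hx])
      rcases hcase with rfl | rfl
      · have hlch : l.Chain' (edge p) := hch.tail
        have hlL : l ∈ Lset N t :=
          gam_subset_Lset hA3 t l hmt (by simp [Gam, Finset.mem_filter, hl, hlch])
        obtain ⟨h, hh, rfl⟩ := mem_Lset.1 hlL
        exact mem_Lset.2 ⟨h + 1, by simpa using Nat.succ_le_succ hh, by simp⟩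
      · have hlch : l.Chain' (edge p) := hch.tail
        have hlL : l ∈ Lset N t :=
          gam_subset_Lset hA3 t l hmt (by simp [Gam, Finset.mem_filter, hl, hlch])
        obtain ⟨h, hh, rfl⟩ := mem_Lset.1 hlL
        cases t with
        | nil => exact mem_Lset.2 ⟨0, by simp, by simp⟩
        | cons b t' =>
            cases h with
            | zero => exact mem_Lset.2 ⟨0, by simp, by simp⟩
            | succ h' =>
                exfalso
                have hhead : edge p (i + N) b := by
                  have := (List.isChain_cons.1 hch).1
                  apply this
                  simp [List.take_succ_cons]
                exact (eA3 hA3 (hmem i (by simp)) (hmem b (by simp))).2.2 hhead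

lemma chain_of_lift (hA3 : A3 p N) : ∀ (σ τ : List ℕ),
    (∀ x ∈ σ, x ∈ Finset.Icc 1 N) → τ ∈ lifts N σ → τ.Chain' (edge p) →
      σ.Chain' (edge p)
  | [], _, _, _, _ => List.isChain_nil
  | i :: t, τ, hmem, hτ, hch => by
      obtain ⟨l, hl, hcase⟩ := mem_lifts_cons.1 hτ
      have hmt : ∀ x ∈ t, x ∈ Finset.Icc 1 N := fun x hx => hmem x (by simp [hx])
      have hlch : l.Chain' (edge p) := by
        rcases hcase with rfl | rfl <;> exact hch.tail
      have htch : t.Chain' (edge p) := chain_of_lift hA3 t l hmt hl hlch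
      cases t with
      | nil => simp [List.Chain']
      | cons b t' =>
          obtain ⟨l', hl', hcase'⟩ := mem_lifts_cons.1 hl
          have hi := hmem i (by simp)
          have hb := hmem b (by simp)
          have hib : edge p i b := by
            rcases hcase with rfl | rfl <;> rcases hcase' with rfl | rfl
            · exact (List.isChain_cons_cons.1 hch).1
            · exact (eA3 hA3 hi hb).1.mpr (List.isChain_cons_cons.1 hch).1
            · exact absurd (List.isChain_cons_cons.1 hch).1 (eA3 hA3 hi hb).2.2
            · exact (eA3 hA3 hi hb).2.1.mpr (List.isChain_cons_cons.1 hch).1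
          exact List.isChain_cons_cons.2 ⟨hib, htch⟩

end Lemma21

/-- **Lemma 2.1.** Assume (A1)–(A3). Then `Γ(σ) = ℒ(σ)` for every `σ ∈ 𝒮_n`, and
`𝒮_n = G_n ∩ Ψ^n` for every `n ≥ 1` (hence `𝒮^* = G^* ∩ Ψ^*`). -/
theorem stmt9
    (N : ℕ) (hN : 2 ≤ N)
    (p : ℕ → ℕ → ℝ)
    (hp0 : ∀ i j, 0 ≤ p i j)
    (hpsupp : ∀ i j, 0 < p i j → i ∈ Finset.Icc 1 (2 * N) ∧ j ∈ Finset.Icc 1 (2 * N))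
    (hpsum : ∀ i ∈ Finset.Icc 1 (2 * N), ∑ j ∈ Finset.Icc 1 (2 * N), p i j = 1)
    (hA1 : A1 p N) (hA2 : A2 p N) (hA3 : A3 p N) :
    (∀ σ : List ℕ, isSword p N σ → Gam p N σ = Lset N σ) ∧
      ∀ σ : List ℕ, isSword p N σ ↔
        (σ ≠ [] ∧ (∀ x ∈ σ, x ∈ Finset.Icc 1 N) ∧ σ.Chain' (edge p)) := by
  have key : ∀ σ : List ℕ, isSword p N σ ↔
      (σ ≠ [] ∧ (∀ x ∈ σ, x ∈ Finset.Icc 1 N) ∧ σ.Chain' (edge p)) := by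
    intro σ
    constructor
    · rintro ⟨⟨hne, hmem⟩, ⟨τ, hτ⟩⟩
      rw [Gam, Finset.mem_filter] at hτ
      exact ⟨hne, hmem, chain_of_lift hA3 σ τ hmem hτ.1 hτ.2⟩
    · rintro ⟨hne, hmem, hch⟩
      refine ⟨⟨hne, hmem⟩, ⟨σ.take 0 ++ (σ.drop 0).map (fun x => x + N), ?_⟩⟩
      rw [Gam, Finset.mem_filter]
      exact ⟨prefixLift_mem_lifts σ 0, prefixLift_chain hA3 σ hmem hch 0⟩
  refine ⟨?_, key⟩
  intro σ hσ
  obtain ⟨hne, hmem, hch⟩ := (key σ).1 hσ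
  apply Finset.Subset.antisymm
  · intro τ hτ
    exact gam_subset_Lset hA3 σ τ hmem hτ
  · intro τ hτ
    obtain ⟨h, _, rfl⟩ := mem_Lset.1 hτ
    rw [Gam, Finset.mem_filter]
    exact ⟨prefixLift_mem_lifts σ h, prefixLift_chain hA3 σ hmem hch h⟩


end MTM

end
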